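/- For the two-dimensional special RHD equations with U = (ρW, ρhW²u, ρhW²v, ρhW² - p), entropy variables V = ((Γ-S)/(Γ-1) + ρ/p, ρWu/p, ρWv/p, -ρW/p)ᵀ, fluxes F = (ρWu, ρhW²u² + p, ρhW²uv, ρhW²u) and G = (ρWv, ρhW²uv, ρhW²v² + p, ρhW²v), and entropy fluxes q_x = -ρuWS/(Γ-1), q_y = -ρvWS/(Γ-1), the potentials satisfy ψ_x := VᵀF - q_x = ρuW and ψ_y := VᵀG - q_y = ρvW. -/
import Mathlib


open Real

/-- For 2D special RHD, the potentials satisfy `ψ_x = VᵀF - q_x = ρuW` and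
`ψ_y = VᵀG - q_y = ρvW`. -/
theorem potentials_2D (Γ ρ u v p : ℝ)
    (hΓ : 1 < Γ) (hΓ2 : Γ ≤ 2) (hρ : 0 < ρ) (hp : 0 < p)
    (huv : u ^ 2 + v ^ 2 < 1)
    (W h S : ℝ)
    (hW : W = 1 / Real.sqrt (1 - u ^ 2 - v ^ 2))
    (hh : h = 1 + Γ * p / ((Γ - 1) * ρ))
    (hS : S = Real.log p - Γ * Real.log ρ) :
    ((Γ - S) / (Γ - 1) + ρ / p) * (ρ * W * u)
        + (ρ * W * u / p) * (ρ * h * W ^ 2 * u ^ 2 + p)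
        + (ρ * W * v / p) * (ρ * h * W ^ 2 * u * v)
        + (-(ρ * W) / p) * (ρ * h * W ^ 2 * u)
        - (-(ρ * u * W * S) / (Γ - 1)) = ρ * u * W ∧
    ((Γ - S) / (Γ - 1) + ρ / p) * (ρ * W * v)
        + (ρ * W * u / p) * (ρ * h * W ^ 2 * u * v)
        + (ρ * W * v / p) * (ρ * h * W ^ 2 * v ^ 2 + p)
        + (-(ρ * W) / p) * (ρ * h * W ^ 2 * v)
        - (-(ρ * v * W * S) / (Γ - 1)) = ρ * v * W := by
  have hd : 0 < 1 - u ^ 2 - v ^ 2 := by linarith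
  have hsq : Real.sqrt (1 - u ^ 2 - v ^ 2) > 0 := Real.sqrt_pos.mpr hd
  have hW2 : W ^ 2 * (1 - u ^ 2 - v ^ 2) = 1 := by
    rw [hW]
    rw [div_pow, one_pow, Real.sq_sqrt hd.le]
    field_simp
  have hΓ1 : Γ - 1 ≠ 0 := by linarith
  have hpne : p ≠ 0 := hp.ne'
  have hρne : ρ ≠ 0 := hρ.ne'
  have hdne : (1 : ℝ) - u ^ 2 - v ^ 2 ≠ 0 := hd.ne'
  have hW2' : W ^ 2 = 1 / (1 - u ^ 2 - v ^ 2) := by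
    field_simp at hW2 ⊢; linarith [hW2]
  subst hh
  rw [hW2']
  constructor <;> (field_simp; ring)
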